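/- Fix an integer n ≥ 1 and real d > 0, and define g(i) := (c/n)(1+d/n)^{i-1} for a constant c > 0. Let w(1) ≥ w(2) ≥ ⋯ ≥ w(n+1) ≥ 0 be nonincreasing reals and let 1 ≤ j ≤ n+1. Define β' := ∑_{i=1}^{n} w(i)g(i) and β := ∑_{i=1}^{j-1} w(i)g(i) + ∑_{i=j+1}^{n+1} w(i)g(i−1). Then n(β' − β) ≤ d·β + c·w(j) − c·(1+d/n)^n · w(n+1). -/

import Mathlib

theorem stmt_13 (n : ℕ) (hn : 1 ≤ n) (d : ℝ) (hd : 0 < d) (c : ℝ) (hc : 0 < c)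
    (g : ℕ → ℝ) (hg : ∀ i, g i = (c / n) * (1 + d / n) ^ (i - 1))
    (w : ℕ → ℝ)
    (hmono : ∀ i₁ i₂ : ℕ, 1 ≤ i₁ → i₁ ≤ i₂ → i₂ ≤ n + 1 → w i₂ ≤ w i₁)
    (hwpos : 0 ≤ w (n + 1))
    (j : ℕ) (hj1 : 1 ≤ j) (hjn : j ≤ n + 1)
    (β' β : ℝ)
    (hβ' : β' = ∑ i ∈ Finset.Icc 1 n, w i * g i)
    (hβ : β = ∑ i ∈ Finset.Icc 1 (j - 1), w i * g i +
        ∑ i ∈ Finset.Icc (j + 1) (n + 1), w i * g (i - 1)) :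
    (n : ℝ) * (β' - β) ≤ d * β + c * w j - c * (1 + d / n) ^ n * w (n + 1) := by
  obtain ⟨m, rfl⟩ : ∃ m, j = m + 1 := ⟨j - 1, (Nat.succ_pred_eq_of_pos hj1).symm⟩
  have hmn : m ≤ n := by omega
  have hnpos : (0 : ℝ) < n := by exact_mod_cast hn
  have hnne : (n : ℝ) ≠ 0 := ne_of_gt hnpos
  have hq1 : (1 : ℝ) < 1 + d / n := by
    have : 0 < d / n := div_pos hd hnpos
    linarith
  have hgnn : ∀ i, 0 ≤ g i := by
    intro i; rw [hg]; positivity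
  -- a generic splitting lemma for range sums
  have hsplit : ∀ f : ℕ → ℝ, ∑ k ∈ Finset.range n, f k =
      ∑ k ∈ Finset.range m, f k + ∑ k ∈ Finset.range (n - m), f (m + k) := by
    intro f
    have h : n = m + (n - m) := by omega
    calc ∑ k ∈ Finset.range n, f k = ∑ k ∈ Finset.range (m + (n - m)), f k := by rw [← h]
      _ = _ := Finset.sum_range_add f m (n - m)
  have hβ'2 : β' = (∑ k ∈ Finset.range m, w (k + 1) * g (k + 1)) +
      ∑ k ∈ Finset.range (n - m), w (m + k + 1) * g (m + k + 1) := by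
    rw [hβ', ← Finset.Ico_add_one_right_eq_Icc, Finset.sum_Ico_eq_sum_range]
    simp only [Nat.add_sub_cancel, Nat.succ_sub_one]
    rw [hsplit (fun k => w (1 + k) * g (1 + k))]
    congr 1
    · apply Finset.sum_congr rfl
      intro k _
      rw [Nat.add_comm 1 k]
    · apply Finset.sum_congr rfl
      intro k _
      have h : 1 + (m + k) = m + k + 1 := by omega
      simp only [h]
  have hβ2 : β = (∑ k ∈ Finset.range m, w (k + 1) * g (k + 1)) +
      ∑ k ∈ Finset.range (n - m), w (m + k + 2) * g (m + k + 1) := by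
    rw [hβ]
    congr 1
    · simp only [Nat.add_sub_cancel]
      rw [← Finset.Ico_add_one_right_eq_Icc, Finset.sum_Ico_eq_sum_range]
      apply Finset.sum_congr rfl
      intro k _
      rw [Nat.add_comm 1 k]
    · rw [← Finset.Ico_add_one_right_eq_Icc, Finset.sum_Ico_eq_sum_range]
      have hcard : n + 1 + 1 - (m + 1 + 1) = n - m := by omega
      rw [hcard]
      apply Finset.sum_congr rfl
      intro k _
      have h1 : m + 1 + 1 + k = m + k + 2 := by omega
      have h2 : m + k + 2 - 1 = m + k + 1 := by omega
      rw [h1, h2]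
  -- key recurrence for g
  have key : ∀ i : ℕ, (n : ℝ) * g (i + 2) = ((n : ℝ) + d) * g (i + 1) := by
    intro i
    rw [hg (i + 2), hg (i + 1)]
    have e1 : i + 2 - 1 = i + 1 := rfl
    have e2 : i + 1 - 1 = i := rfl
    rw [e1, e2]
    rw [pow_succ]
    field_simp
  -- telescoping
  set F : ℕ → ℝ := fun k => (n : ℝ) * w (m + k + 1) * g (m + k + 1) with hF
  have step : ∀ k : ℕ, F k - F (k + 1) =
      (n : ℝ) * (w (m + k + 1) * g (m + k + 1)) -
        ((n : ℝ) * (w (m + k + 2) * g (m + k + 1)) +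
          d * (w (m + k + 2) * g (m + k + 1))) := by
    intro k
    have hk := key (m + k)
    simp only [hF]
    have h : m + (k + 1) + 1 = m + k + 2 := by omega
    rw [h]
    linear_combination (-(w (m + k + 2))) * hk
  have hsum : F 0 - F (n - m) =
      (n : ℝ) * (∑ k ∈ Finset.range (n - m), w (m + k + 1) * g (m + k + 1)) -
        ((n : ℝ) * (∑ k ∈ Finset.range (n - m), w (m + k + 2) * g (m + k + 1)) +
          d * (∑ k ∈ Finset.range (n - m), w (m + k + 2) * g (m + k + 1))) := by
    rw [← Finset.sum_range_sub' F (n - m)]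
    rw [Finset.sum_congr rfl (fun k _ => step k)]
    rw [Finset.sum_sub_distrib, Finset.sum_add_distrib, ← Finset.mul_sum,
      ← Finset.mul_sum, ← Finset.mul_sum]
  -- evaluate F 0 and F (n - m)
  have hF0 : F 0 = c * w (m + 1) * (1 + d / n) ^ m := by
    simp only [hF]
    rw [hg (m + 0 + 1)]
    simp only [Nat.add_sub_cancel, Nat.add_zero]
    field_simp
  have hFnm : F (n - m) = c * w (n + 1) * (1 + d / n) ^ n := by
    simp only [hF]
    have h : m + (n - m) + 1 = n + 1 := by omega
    rw [h, hg (n + 1)]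
    simp only [Nat.add_sub_cancel]
    field_simp
  -- geometric sum bound
  have hgeom : d * ∑ k ∈ Finset.range m, g (k + 1) = c * ((1 + d / n) ^ m - 1) := by
    have h : ∀ k, g (k + 1) = (c / n) * (1 + d / n) ^ k := by
      intro k; rw [hg]; simp only [Nat.add_sub_cancel]
    rw [Finset.sum_congr rfl (fun k _ => h k), ← Finset.mul_sum,
      geom_sum_eq (ne_of_gt hq1)]
    have h2 : 1 + d / n - 1 = d / n := by ring
    rw [h2]
    field_simp
  have hw0 : 0 ≤ w (m + 1) :=
    le_trans hwpos (hmono (m + 1) (n + 1) (by omega) (by omega) le_rfl)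
  have hSbound : w (m + 1) * ∑ k ∈ Finset.range m, g (k + 1) ≤
      ∑ k ∈ Finset.range m, w (k + 1) * g (k + 1) := by
    rw [Finset.mul_sum]
    apply Finset.sum_le_sum
    intro k hk
    have hk' : k < m := Finset.mem_range.mp hk
    exact mul_le_mul_of_nonneg_right
      (hmono (k + 1) (m + 1) (by omega) (by omega) (by omega)) (hgnn _)
  have hfin : c * w (m + 1) * ((1 + d / n) ^ m - 1) ≤
      d * ∑ k ∈ Finset.range m, w (k + 1) * g (k + 1) := by
    have h1 : c * w (m + 1) * ((1 + d / n) ^ m - 1) =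
        d * (w (m + 1) * ∑ k ∈ Finset.range m, g (k + 1)) := by
      linear_combination (-(w (m + 1))) * hgeom
    rw [h1]
    exact mul_le_mul_of_nonneg_left hSbound (le_of_lt hd)
  rw [hβ'2, hβ2]
  rw [hF0, hFnm] at hsum
  linarith [hsum, hfin]
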